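/- (Theorem 3.2, explicit form for e = 1.) Assume in addition the BKL relation: ∑_{n=0}^{1−c} (−1)^{n+c} B_i^{(n)} B_{τi} B_i^{(1−c−n)} = (q_i − q_i^{-1})^{-1} ( q_i^{c} (q_i^{-2}; q_i^{-2})_{−c} B_i^{(−c)} k̃_i − (q_i^{2}; q_i^{2})_{−c} B_i^{(−c)} k̃_{τi} ), where (a; x)_n = ∏_{k=0}^{n−1} (1 − a x^k). Then for every integer m > 1−c: ∑_{r+s=m, r,s≥0} (−1)^{r+c} q_i^{r(1−c−m)} B_i^{(r)} B_{τi} B_i^{(s)} = (−1)^{1−c} [m−1]! (q_i − q_i^{-1})^{m−2} q_i^{(1−m)(m−2+2c)/2} B_i^{(m−1)} k̃_{τi}. -/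

import Mathlib

noncomputable section

/-- The quantum integer `[n]_v = (v^n - v^{-n})/(v - v^{-1})`. -/
def qint {K : Type*} [Field K] (v : RatFunc K) (n : ℤ) : RatFunc K :=
  (v ^ n - v ^ (-n)) / (v - v⁻¹)

/-- The quantum factorial `[m]_v! = [1]_v [2]_v ⋯ [m]_v`. -/
def qfact {K : Type*} [Field K] (v : RatFunc K) (m : ℕ) : RatFunc K :=
  ∏ k ∈ Finset.range m, qint v ((k : ℤ) + 1)

/-- The q-Pochhammer symbol `(a; x)_n = ∏_{k=0}^{n-1} (1 - a x^k)`. -/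
def qpoch {K : Type*} [Field K] (a x : RatFunc K) (n : ℕ) : RatFunc K :=
  ∏ k ∈ Finset.range n, (1 - a * x ^ k)

/-- The divided power `x^{(m)} = x^m/[m]_v!` for `m ≥ 0`, and `0` for `m < 0`. -/
def dp {K : Type*} [Field K] {A : Type*} [Ring A] [Algebra (RatFunc K) A]
    (v : RatFunc K) (x : A) (m : ℤ) : A :=
  if m < 0 then 0 else (qfact v m.toNat)⁻¹ • x ^ m.toNat

/-- `P_{m,e} = ∏_{j=0}^{c+m−2} (−q_i^{e(2j−c−2m+2)} + q_i^{c−2})`,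
an empty product (occurring when `c+m−2 < 0`) being `1`. -/
def Pprod {K : Type*} [Field K] (v : RatFunc K) (c : ℤ) (m : ℕ) (e : ℤ) : RatFunc K :=
  ∏ j ∈ Finset.range (c + (m : ℤ) - 1).toNat,
    (-(v ^ (e * (2 * (j : ℤ) - c - 2 * (m : ℤ) + 2))) + v ^ (c - 2))

/-- `Q_{m,e} = ∏_{j=0}^{c+m−2} (−q_i^{e(2j−c−2m+2)} + q_i^{2−c})`. -/
def Qprod {K : Type*} [Field K] (v : RatFunc K) (c : ℤ) (m : ℕ) (e : ℤ) : RatFunc K :=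
  ∏ j ∈ Finset.range (c + (m : ℤ) - 1).toNat,
    (-(v ^ (e * (2 * (j : ℤ) - c - 2 * (m : ℤ) + 2))) + v ^ (2 - c))

/-- The element `ỹ_{m,e} = ∑_{r+s=m} (−1)^{r+c} q_i^{er(1−c−m)} B_i^{(r)} B_{τi} B_i^{(s)}
− ([1−c]!/[m]) (q_i−q_i^{-1})^{−c−1} ( P_{m,e} q_i^{(−c²+3c)/2} B_i^{(m−1)} k̃_i
  − (−1)^c Q_{m,e} q_i^{(c²−c)/2} B_i^{(m−1)} k̃_{τi} )`. -/
def ytil {K : Type*} [Field K] {A : Type*} [Ring A] [Algebra (RatFunc K) A]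
    (v : RatFunc K) (Bi Bt ki kt : A) (c : ℤ) (m : ℕ) (e : ℤ) : A :=
  (∑ r ∈ Finset.range (m + 1),
      ((-1 : RatFunc K) ^ ((r : ℤ) + c) * v ^ (e * (r : ℤ) * (1 - c - (m : ℤ)))) •
        (dp v Bi (r : ℤ) * Bt * dp v Bi ((m : ℤ) - (r : ℤ))))
    - (qfact v (1 - c).toNat / qint v (m : ℤ) * (v - v⁻¹) ^ (-c - 1)) •
      ((Pprod v c m e * v ^ ((-c ^ 2 + 3 * c) / 2)) • (dp v Bi ((m : ℤ) - 1) * ki)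
        - ((-1 : RatFunc K) ^ c * Qprod v c m e * v ^ ((c ^ 2 - c) / 2)) •
            (dp v Bi ((m : ℤ) - 1) * kt))

/-- The order-reversed element `ỹ'_{m,e}`. -/
def ytil' {K : Type*} [Field K] {A : Type*} [Ring A] [Algebra (RatFunc K) A]
    (v : RatFunc K) (Bi Bt ki kt : A) (c : ℤ) (m : ℕ) (e : ℤ) : A :=
  (∑ r ∈ Finset.range (m + 1),
      ((-1 : RatFunc K) ^ ((r : ℤ) + c) * v ^ (e * (r : ℤ) * (1 - c - (m : ℤ)))) •
        (dp v Bi ((m : ℤ) - (r : ℤ)) * Bt * dp v Bi (r : ℤ)))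
    - (qfact v (1 - c).toNat / qint v (m : ℤ) * (v - v⁻¹) ^ (-c - 1)) •
      ((Pprod v c m e * v ^ ((-c ^ 2 + 3 * c) / 2)) • (kt * dp v Bi ((m : ℤ) - 1))
        - ((-1 : RatFunc K) ^ c * Qprod v c m e * v ^ ((c ^ 2 - c) / 2)) •
            (ki * dp v Bi ((m : ℤ) - 1)))

/-- The BKL relation
`∑_{n=0}^{1−c} (−1)^{n+c} B_i^{(n)} B_{τi} B_i^{(1−c−n)}
 = (q_i−q_i^{-1})^{-1} ( q_i^c (q_i^{-2};q_i^{-2})_{−c} B_i^{(−c)} k̃_i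
   − (q_i^2;q_i^2)_{−c} B_i^{(−c)} k̃_{τi} )`. -/
def BKL {K : Type*} [Field K] {A : Type*} [Ring A] [Algebra (RatFunc K) A]
    (v : RatFunc K) (Bi Bt ki kt : A) (c : ℤ) : Prop :=
  ∑ n ∈ Finset.range ((1 - c).toNat + 1),
      ((-1 : RatFunc K) ^ ((n : ℤ) + c)) • (dp v Bi (n : ℤ) * Bt * dp v Bi (1 - c - (n : ℤ)))
    = (v - v⁻¹)⁻¹ •
        ((v ^ c * qpoch (v ^ (-2 : ℤ)) (v ^ (-2 : ℤ)) (-c).toNat) • (dp v Bi (-c) * ki)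
          - qpoch (v ^ (2 : ℤ)) (v ^ (2 : ℤ)) (-c).toNat • (dp v Bi (-c) * kt))

namespace Aux

variable {K : Type*} [Field K]

lemma qint_zero (v : RatFunc K) : qint v 0 = 0 := by simp [qint]

lemma generic {K : Type*} [Field K] [CharZero K] (ε : ℕ) (hε : 0 < ε) (v : RatFunc K)
    (hv : v = RatFunc.X ^ ε) : v ≠ 0 ∧ ∀ z : ℤ, z ≠ 0 → v ^ z ≠ 1 := by
  have hX : (RatFunc.X : RatFunc K) ≠ 0 := RatFunc.X_ne_zero
  have hXn : ∀ n : ℕ, n ≠ 0 → (RatFunc.X : RatFunc K) ^ n ≠ 1 := by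
    intro n hn h
    have : (algebraMap (Polynomial K) (RatFunc K)) (Polynomial.X ^ n) = algebraMap _ _ 1 := by
      simpa [map_pow] using h
    have h2 := RatFunc.algebraMap_injective K this
    have := congrArg Polynomial.natDegree h2
    simp [Polynomial.natDegree_X_pow] at this
    exact hn this
  have hv0 : v ≠ 0 := by rw [hv]; exact pow_ne_zero _ hX
  refine ⟨hv0, ?_⟩
  intro z hz h
  have hvz : v ^ z = RatFunc.X ^ ((ε : ℤ) * z) := by
    rw [hv, ← zpow_natCast (RatFunc.X : RatFunc K) ε, ← zpow_mul]
  rw [hvz] at h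
  set w : ℤ := (ε : ℤ) * z with hw
  have hwne : w ≠ 0 := by
    simp only [hw, mul_ne_zero_iff]
    exact ⟨by exact_mod_cast hε.ne', hz⟩
  rcases lt_trichotomy w 0 with hlt | heq | hgt
  · have : (RatFunc.X : RatFunc K) ^ (-w) = 1 := by
      rw [← inv_inj]
      simpa [← zpow_neg] using h
    have : (RatFunc.X : RatFunc K) ^ (-w).toNat = 1 := by
      rwa [← zpow_natCast, Int.toNat_of_nonneg (by omega)]
    exact hXn _ (by omega) this
  · exact hwne heq
  · have : (RatFunc.X : RatFunc K) ^ w.toNat = 1 := by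
      rw [← zpow_natCast, Int.toNat_of_nonneg (by omega)]
      exact h
    exact hXn _ (by omega) this

variable (v : RatFunc K)

lemma sub_inv_ne_zero (hv0 : v ≠ 0) (hvg : ∀ z : ℤ, z ≠ 0 → v ^ z ≠ 1) : v - v⁻¹ ≠ 0 := by
  intro h
  have hv2 : v ^ (2:ℤ) = 1 := by
    have h1 : v = v⁻¹ := by linear_combination h
    calc v ^ (2:ℤ) = v * v := by rw [zpow_two]
    _ = v * v⁻¹ := by rw [← h1]
    _ = 1 := mul_inv_cancel₀ hv0
  exact hvg 2 (by norm_num) hv2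

lemma qint_ne_zero (hv0 : v ≠ 0) (hvg : ∀ z : ℤ, z ≠ 0 → v ^ z ≠ 1) (n : ℤ) (hn : n ≠ 0) : qint v n ≠ 0 := by
  apply div_ne_zero _ (sub_inv_ne_zero v hv0 hvg)
  intro h
  have h1 : v ^ n = v ^ (-n) := by linear_combination h
  have h2 : v ^ (2 * n) = 1 := by
    rw [two_mul, zpow_add₀ hv0]
    calc v ^ n * v ^ n = v ^ n * v ^ (-n) := by rw [← h1]
    _ = 1 := by rw [← zpow_add₀ hv0]; simp
  exact hvg _ (by omega) h2

lemma qfact_succ (m : ℕ) : qfact v (m + 1) = qfact v m * qint v ((m : ℤ) + 1) :=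
  Finset.prod_range_succ _ _

lemma qfact_ne_zero (hv0 : v ≠ 0) (hvg : ∀ z : ℤ, z ≠ 0 → v ^ z ≠ 1) (m : ℕ) : qfact v m ≠ 0 := by
  apply Finset.prod_ne_zero_iff.mpr
  intro k _
  exact qint_ne_zero v hv0 hvg _ (by omega)

end Aux
section Chunk2
namespace Aux
variable {K : Type*} [Field K] (v : RatFunc K)

lemma qint_mul_d (hv0 : v ≠ 0) (hvg : ∀ z : ℤ, z ≠ 0 → v ^ z ≠ 1) (n : ℤ) :
    qint v n * (v - v⁻¹) = v ^ n - v ^ (-n) :=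
  div_mul_cancel₀ _ (sub_inv_ne_zero v hv0 hvg)

lemma dp_mul {A : Type*} [Ring A] [Algebra (RatFunc K) A]
    (hv0 : v ≠ 0) (hvg : ∀ z : ℤ, z ≠ 0 → v ^ z ≠ 1) (x : A) (n : ℤ) :
    dp v x n * x = qint v (n + 1) • dp v x (n + 1) := by
  rcases lt_trichotomy n (-1) with h | h | h
  · rw [dp, dp, if_pos (by omega), if_pos (by omega), zero_mul, smul_zero]
  · subst h
    rw [dp, if_pos (by norm_num), zero_mul]
    norm_num [qint_zero]
  · have hn : 0 ≤ n := by omega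
    rw [dp, dp, if_neg (by omega), if_neg (by omega)]
    have ht : (n + 1).toNat = n.toNat + 1 := by omega
    rw [ht, smul_mul_assoc, ← pow_succ, qfact_succ, smul_smul]
    congr 1
    have hc : ((n.toNat : ℤ)) = n := Int.toNat_of_nonneg hn
    rw [hc]
    have h1 := qfact_ne_zero v hv0 hvg n.toNat
    have h2 := qint_ne_zero v hv0 hvg (n + 1) (by omega)
    field_simp

lemma mul_dp {A : Type*} [Ring A] [Algebra (RatFunc K) A]
    (hv0 : v ≠ 0) (hvg : ∀ z : ℤ, z ≠ 0 → v ^ z ≠ 1) (x : A) (n : ℤ) :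
    x * dp v x n = qint v (n + 1) • dp v x (n + 1) := by
  rcases lt_trichotomy n (-1) with h | h | h
  · rw [dp, dp, if_pos (by omega), if_pos (by omega), mul_zero, smul_zero]
  · subst h
    rw [dp, if_pos (by norm_num), mul_zero]
    norm_num [qint_zero]
  · have hn : 0 ≤ n := by omega
    rw [dp, dp, if_neg (by omega), if_neg (by omega)]
    have ht : (n + 1).toNat = n.toNat + 1 := by omega
    rw [ht, mul_smul_comm, ← pow_succ', qfact_succ, smul_smul]
    congr 1
    have hc : ((n.toNat : ℤ)) = n := Int.toNat_of_nonneg hn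
    rw [hc]
    have h1 := qfact_ne_zero v hv0 hvg n.toNat
    have h2 := qint_ne_zero v hv0 hvg (n + 1) (by omega)
    field_simp

lemma qpoch_sq (hv0 : v ≠ 0) (hvg : ∀ z : ℤ, z ≠ 0 → v ^ z ≠ 1) (n : ℕ) :
    qpoch (v ^ (2 : ℤ)) (v ^ (2 : ℤ)) n
      = (-1 : RatFunc K) ^ n * v ^ (((n : ℤ) * ((n : ℤ) + 1)) / 2) *
          (v - v⁻¹) ^ n * qfact v n := by
  induction n with
  | zero => simp [qpoch, qfact]
  | succ n ih =>
    rw [qpoch, Finset.prod_range_succ, ← qpoch, ih, qfact_succ]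
    have hx : (v ^ (2 : ℤ)) ^ n = v ^ (2 * (n : ℤ)) := by
      rw [← zpow_natCast (v ^ (2:ℤ)) n, ← zpow_mul]
    have hT : ((n : ℤ) + 1) * (((n : ℤ) + 1) + 1) = (n : ℤ) * ((n : ℤ) + 1) + ((n:ℤ) + 1) * 2 := by
      ring
    have hT2 : (((n:ℤ) + 1) * (((n:ℤ) + 1) + 1)) / 2
        = ((n : ℤ) * ((n : ℤ) + 1)) / 2 + ((n:ℤ) + 1) := by
      rw [hT, Int.add_mul_ediv_right _ _ (by norm_num : (2:ℤ) ≠ 0)]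
    push_cast
    rw [hT2, zpow_add₀ hv0]
    have hq := qint_mul_d v hv0 hvg ((n:ℤ) + 1)
    have hm1 : v ^ ((n:ℤ)+1) * (v ^ ((n:ℤ)+1) - v ^ (-((n:ℤ)+1))) = v ^ (2*(n:ℤ)) * v^(2:ℤ) - 1 := by
      rw [mul_sub, ← zpow_add₀ hv0, ← zpow_add₀ hv0, ← zpow_add₀ hv0]
      norm_num
      rw [show (n:ℤ) + 1 + ((n:ℤ)+1) = 2*(n:ℤ)+2 by ring, show (2:ℤ)*(n:ℤ)+2 = 2*((n:ℤ)+1) by ring]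
    rw [hx]
    calc (-1:RatFunc K) ^ n * v ^ ((n:ℤ) * ((n:ℤ)+1) / 2) * (v - v⁻¹) ^ n * qfact v n *
          (1 - v ^ (2:ℤ) * v ^ (2*(n:ℤ)))
        = (-1:RatFunc K) ^ n * v ^ ((n:ℤ) * ((n:ℤ)+1) / 2) * (v - v⁻¹) ^ n * qfact v n *
          (-(v ^ ((n:ℤ)+1) * (qint v ((n:ℤ)+1) * (v - v⁻¹)))) := by
          rw [hq, hm1]; ring
      _ = (-1:RatFunc K) ^ (n+1) * (v ^ ((n:ℤ) * ((n:ℤ)+1) / 2) * v ^ ((n:ℤ)+1)) *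
          (v - v⁻¹) ^ (n+1) * (qfact v n * qint v ((n:ℤ)+1)) := by
          ring
end Aux
end Chunk2
section Chunk3
namespace Aux
variable {K : Type*} [Field K] (v : RatFunc K)

lemma scalar_key (hv0 : v ≠ 0) (hvg : ∀ z : ℤ, z ≠ 0 → v ^ z ≠ 1) (c m r : ℤ) :
    v ^ (c + 2 * m) * qint v (m + 1) * ((-1 : RatFunc K) ^ (r + c) * v ^ (r * (1 - c - (m + 1))))
      = v ^ (c + 2 * m) * ((-1 : RatFunc K) ^ (r + c) * v ^ (r * (1 - c - m))) *
          qint v (m + 1 - r)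
        - ((-1 : RatFunc K) ^ ((r - 1) + c) * v ^ ((r - 1) * (1 - c - m))) * qint v r := by
  have hneg : (-1 : RatFunc K) ^ ((r - 1) + c) = -((-1 : RatFunc K) ^ (r + c)) := by
    have h1 : ((-1 : RatFunc K)) ^ (r + c) = (-1 : RatFunc K) ^ ((r - 1) + c) * (-1) := by
      rw [← zpow_add_one₀ (by norm_num : (-1 : RatFunc K) ≠ 0)]
      congr 1
      ring
    rw [h1]; ring
  rw [hneg]
  have num : v ^ (c + 2*m) * v ^ (r * (1 - c - (m+1))) * (v ^ (m+1) - v ^ (-(m+1)))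
      = v ^ (c + 2*m) * v ^ (r * (1 - c - m)) * (v ^ (m+1-r) - v ^ (-(m+1-r)))
        + v ^ ((r-1) * (1 - c - m)) * (v ^ r - v ^ (-r)) := by
    simp only [mul_sub, ← zpow_add₀ hv0]
    ring_nf
  simp only [qint, div_eq_mul_inv]
  linear_combination ((-1 : RatFunc K) ^ (r + c)) * (v - v⁻¹)⁻¹ * num

end Aux
end Chunk3
section Chunk4

def ysum {K : Type*} [Field K] {A : Type*} [Ring A] [Algebra (RatFunc K) A]
    (v : RatFunc K) (Bi Bt : A) (c : ℤ) (m : ℕ) : A :=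
  ∑ r ∈ Finset.range (m + 1),
    ((-1 : RatFunc K) ^ ((r : ℤ) + c) * v ^ ((r : ℤ) * (1 - c - (m : ℤ)))) •
      (dp v Bi (r : ℤ) * Bt * dp v Bi ((m : ℤ) - (r : ℤ)))

namespace Aux
variable {K : Type*} [Field K] (v : RatFunc K)

lemma key_rec {A : Type*} [Ring A] [Algebra (RatFunc K) A]
    (hv0 : v ≠ 0) (hvg : ∀ z : ℤ, z ≠ 0 → v ^ z ≠ 1) (Bi Bt : A) (c : ℤ) (m : ℕ) :
    (v ^ (c + 2 * (m : ℤ)) * qint v ((m : ℤ) + 1)) • ysum v Bi Bt c (m + 1)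
      = v ^ (c + 2 * (m : ℤ)) • (ysum v Bi Bt c m * Bi) - Bi * ysum v Bi Bt c m := by
  have hA : ysum v Bi Bt c m * Bi
      = ∑ r ∈ Finset.range (m + 2),
          ((-1 : RatFunc K) ^ ((r : ℤ) + c) * v ^ ((r : ℤ) * (1 - c - (m : ℤ))) *
              qint v ((m : ℤ) + 1 - (r : ℤ))) •
            (dp v Bi (r : ℤ) * Bt * dp v Bi ((m : ℤ) + 1 - (r : ℤ))) := by
    rw [ysum, Finset.sum_mul, Finset.sum_range_succ
      (f := fun r : ℕ => ((-1 : RatFunc K) ^ ((r : ℤ) + c) * v ^ ((r : ℤ) * (1 - c - (m : ℤ))) *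
              qint v ((m : ℤ) + 1 - (r : ℤ))) •
            (dp v Bi (r : ℤ) * Bt * dp v Bi ((m : ℤ) + 1 - (r : ℤ))))]
    have hz : ((m : ℤ) + 1 - ((m + 1 : ℕ) : ℤ)) = 0 := by push_cast; ring
    rw [hz, qint_zero, mul_zero, zero_smul, add_zero]
    apply Finset.sum_congr rfl
    intro r _
    rw [smul_mul_assoc, mul_assoc, dp_mul v hv0 hvg,
        show (m : ℤ) - (r : ℤ) + 1 = (m : ℤ) + 1 - (r : ℤ) by ring, mul_smul_comm, smul_smul]
  have hB : Bi * ysum v Bi Bt c m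
      = ∑ r ∈ Finset.range (m + 2),
          ((-1 : RatFunc K) ^ (((r : ℤ) - 1) + c) * v ^ (((r : ℤ) - 1) * (1 - c - (m : ℤ))) *
              qint v (r : ℤ)) •
            (dp v Bi (r : ℤ) * Bt * dp v Bi ((m : ℤ) + 1 - (r : ℤ))) := by
    rw [ysum, Finset.mul_sum, Finset.sum_range_succ'
      (f := fun r : ℕ => ((-1 : RatFunc K) ^ (((r : ℤ) - 1) + c) * v ^ (((r : ℤ) - 1) * (1 - c - (m : ℤ))) *
              qint v (r : ℤ)) •
            (dp v Bi (r : ℤ) * Bt * dp v Bi ((m : ℤ) + 1 - (r : ℤ))))]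
    rw [show (((0 : ℕ) : ℤ)) = (0 : ℤ) by norm_num, qint_zero, mul_zero, zero_smul, add_zero]
    apply Finset.sum_congr rfl
    intro r _
    have hc1 : (((r + 1 : ℕ) : ℤ) - 1) = (r : ℤ) := by push_cast; ring
    have hc2 : ((r + 1 : ℕ) : ℤ) = (r : ℤ) + 1 := by push_cast; ring
    rw [hc1, hc2, show (m : ℤ) + 1 - ((r : ℤ) + 1) = (m : ℤ) - (r : ℤ) by ring]
    rw [mul_smul_comm, ← mul_assoc, ← mul_assoc, mul_dp v hv0 hvg, smul_mul_assoc,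
        smul_mul_assoc, smul_smul]
  rw [hA, hB, Finset.smul_sum, ← Finset.sum_sub_distrib, ysum, Finset.smul_sum]
  apply Finset.sum_congr rfl
  intro r _
  rw [smul_smul, smul_smul, ← sub_smul]
  have hc3 : ((m + 1 : ℕ) : ℤ) = (m : ℤ) + 1 := by push_cast; ring
  rw [hc3]
  congr 1
  linear_combination scalar_key v hv0 hvg c (m : ℤ) (r : ℤ)

end Aux
end Chunk4
section Chunk5

def lam {K : Type*} [Field K] (v : RatFunc K) (c : ℤ) (m : ℕ) : RatFunc K :=
  (-1 : RatFunc K) ^ (1 - c) * qfact v (m - 1) * (v - v⁻¹) ^ ((m : ℤ) - 2) *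
    v ^ ((1 - (m : ℤ)) * ((m : ℤ) - 2 + 2 * c) / 2)

namespace Aux
variable {K : Type*} [Field K] (v : RatFunc K)

lemma step_scalar (hv0 : v ≠ 0) (hvg : ∀ z : ℤ, z ≠ 0 → v ^ z ≠ 1) (c : ℤ) (m : ℕ) (hm : 2 ≤ m) :
    lam v c m * qint v (m : ℤ) * (v ^ (c + 2 * (m : ℤ)) * v ^ (2 - c) - 1)
      = (v ^ (c + 2 * (m : ℤ)) * qint v ((m : ℤ) + 1)) * lam v c (m + 1) := by
  have hd := sub_inv_ne_zero v hv0 hvg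
  have hdp : (v - v⁻¹) ^ (((m : ℤ) + 1) - 2) = (v - v⁻¹) ^ ((m : ℤ) - 2) * (v - v⁻¹) := by
    rw [show ((m : ℤ) + 1) - 2 = ((m : ℤ) - 2) + 1 by ring, zpow_add_one₀ hd]
  have hE : (1 - ((m : ℤ) + 1)) * (((m : ℤ) + 1) - 2 + 2 * c) / 2
      = (1 - (m : ℤ)) * ((m : ℤ) - 2 + 2 * c) / 2 + (1 - c - (m : ℤ)) := by
    rw [show (1 - ((m : ℤ) + 1)) * (((m : ℤ) + 1) - 2 + 2 * c)
        = (1 - (m : ℤ)) * ((m : ℤ) - 2 + 2 * c) + (1 - c - (m : ℤ)) * 2 by ring,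
      Int.add_mul_ediv_right _ _ (by norm_num : (2 : ℤ) ≠ 0)]
  have hq := qint_mul_d v hv0 hvg ((m : ℤ) + 1)
  have h1 : v ^ (c + 2 * (m : ℤ)) * v ^ (2 - c) = v ^ (2 * (m : ℤ) + 2) := by
    rw [← zpow_add₀ hv0]; ring_nf
  have h3 : v ^ (c + 2 * (m : ℤ)) * v ^ (1 - c - (m : ℤ)) = v ^ ((m : ℤ) + 1) := by
    rw [← zpow_add₀ hv0]; ring_nf
  have h4 : v ^ ((m : ℤ) + 1) * (v ^ ((m : ℤ) + 1) - v ^ (-((m : ℤ) + 1)))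
      = v ^ (2 * (m : ℤ) + 2) - 1 := by
    rw [mul_sub, ← zpow_add₀ hv0, ← zpow_add₀ hv0]
    ring_nf
    simp only [zpow_zero]
    ring_nf
  rw [lam, lam]
  push_cast
  have hqf' : qfact v m = qfact v (m - 1) * qint v (m : ℤ) := by
    calc qfact v m = qfact v ((m - 1) + 1) := by rw [Nat.sub_add_cancel (by omega : 1 ≤ m)]
      _ = qfact v (m - 1) * qint v (((m - 1 : ℕ) : ℤ) + 1) := qfact_succ v (m - 1)
      _ = qfact v (m - 1) * qint v (m : ℤ) := by
            have hcast : ((m - 1 : ℕ) : ℤ) + 1 = (m : ℤ) := by omega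
            rw [hcast]
  have hE2 : v ^ ((1 - ((m : ℤ) + 1)) * (((m : ℤ) + 1) - 2 + 2 * c) / 2)
      = v ^ ((1 - (m : ℤ)) * ((m : ℤ) - 2 + 2 * c) / 2) * v ^ (1 - c - (m : ℤ)) := by
    rw [hE, zpow_add₀ hv0]
  rw [hqf', hdp]
  linear_combination
    ((-1 : RatFunc K) ^ (1 - c) * qfact v (m - 1) * (v - v⁻¹) ^ ((m : ℤ) - 2) *
        v ^ ((1 - (m : ℤ)) * ((m : ℤ) - 2 + 2 * c) / 2) * qint v (m : ℤ)) * h1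
    - ((-1 : RatFunc K) ^ (1 - c) * qfact v (m - 1) * (v - v⁻¹) ^ ((m : ℤ) - 2) *
        v ^ ((1 - (m : ℤ)) * ((m : ℤ) - 2 + 2 * c) / 2) * qint v (m : ℤ) *
        qint v ((m : ℤ) + 1) * (v - v⁻¹)) * h3
    - ((-1 : RatFunc K) ^ (1 - c) * qfact v (m - 1) * (v - v⁻¹) ^ ((m : ℤ) - 2) *
        v ^ ((1 - (m : ℤ)) * ((m : ℤ) - 2 + 2 * c) / 2) * qint v (m : ℤ) *
        v ^ ((m : ℤ) + 1)) * hq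
    - ((-1 : RatFunc K) ^ (1 - c) * qfact v (m - 1) * (v - v⁻¹) ^ ((m : ℤ) - 2) *
        v ^ ((1 - (m : ℤ)) * ((m : ℤ) - 2 + 2 * c) / 2) * qint v (m : ℤ)) * h4
    - (v ^ (c + 2 * (m : ℤ)) * qint v ((m : ℤ) + 1) * ((-1 : RatFunc K) ^ (1 - c) *
        (qfact v (m - 1) * qint v (m : ℤ)) * ((v - v⁻¹) ^ ((m : ℤ) - 2) * (v - v⁻¹)))) * hE2

end Aux
end Chunk5
section Chunk6
namespace Aux
variable {K : Type*} [Field K] (v : RatFunc K)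

lemma step_A {A : Type*} [Ring A] [Algebra (RatFunc K) A]
    (hv0 : v ≠ 0) (hvg : ∀ z : ℤ, z ≠ 0 → v ^ z ≠ 1) (Bi Bt kt : A) (c : ℤ)
    (hkt : kt * Bi = v ^ (2 - c) • (Bi * kt)) (m : ℕ) (hm : 2 ≤ m)
    (ih : ysum v Bi Bt c m = lam v c m • (dp v Bi ((m : ℤ) - 1) * kt)) :
    ysum v Bi Bt c (m + 1) = lam v c (m + 1) • (dp v Bi (((m + 1 : ℕ) : ℤ) - 1) * kt) := by
  have hd := sub_inv_ne_zero v hv0 hvg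
  have ha : v ^ (c + 2 * (m : ℤ)) * qint v ((m : ℤ) + 1) ≠ 0 :=
    mul_ne_zero (zpow_ne_zero _ hv0) (qint_ne_zero v hv0 hvg _ (by omega))
  have hrec := key_rec v hv0 hvg Bi Bt c m
  rw [ih] at hrec
  have e1 : (lam v c m • (dp v Bi ((m : ℤ) - 1) * kt)) * Bi
      = ((lam v c m * v ^ (2 - c)) * qint v (m : ℤ)) • (dp v Bi (m : ℤ) * kt) := by
    rw [smul_mul_assoc, mul_assoc, hkt, mul_smul_comm, ← mul_assoc, dp_mul v hv0 hvg,
      show (m : ℤ) - 1 + 1 = (m : ℤ) by ring, smul_mul_assoc, smul_smul, smul_smul]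
  have e2 : Bi * (lam v c m • (dp v Bi ((m : ℤ) - 1) * kt))
      = (lam v c m * qint v (m : ℤ)) • (dp v Bi (m : ℤ) * kt) := by
    rw [mul_smul_comm, ← mul_assoc, mul_dp v hv0 hvg,
      show (m : ℤ) - 1 + 1 = (m : ℤ) by ring, smul_mul_assoc, smul_smul]
  rw [e1, e2, smul_smul, ← sub_smul] at hrec
  have h5 := congrArg (fun z => (v ^ (c + 2 * (m : ℤ)) * qint v ((m : ℤ) + 1))⁻¹ • z) hrec
  simp only [smul_smul, inv_mul_cancel₀ ha, one_smul] at h5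
  rw [h5, show ((m + 1 : ℕ) : ℤ) - 1 = (m : ℤ) by push_cast; ring]
  congr 1
  have hs := step_scalar v hv0 hvg c m hm
  rw [inv_mul_eq_iff_eq_mul₀ ha]
  linear_combination hs

end Aux
end Chunk6
section Chunk7
namespace Aux
variable {K : Type*} [Field K] (v : RatFunc K)

lemma base_scalar (hv0 : v ≠ 0) (hvg : ∀ z : ℤ, z ≠ 0 → v ^ z ≠ 1) (c : ℤ) (hc : c ≤ 0) :
    (v - v⁻¹)⁻¹ * qpoch (v ^ (2 : ℤ)) (v ^ (2 : ℤ)) (-c).toNat * qint v (-c + 1) *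
        (1 - v ^ (2 - c) * v ^ (2 - c))
      = (v ^ (2 - c) * qint v (2 - c)) * lam v c ((1 - c).toNat + 1) := by
  have hd := sub_inv_ne_zero v hv0 hvg
  have hn : (((-c).toNat : ℕ) : ℤ) = -c := Int.toNat_of_nonneg (by omega)
  have hcast : (((1 - c).toNat + 1 : ℕ) : ℤ) = 2 - c := by omega
  rw [qpoch_sq v hv0 hvg, lam, hcast, Nat.add_sub_cancel]
  have hqf : qfact v (1 - c).toNat = qfact v ((-c).toNat) * qint v (-c + 1) := by
    rw [show (1 - c).toNat = (-c).toNat + 1 by omega, qfact_succ]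
    have h7 : (((-c).toNat : ℕ) : ℤ) + 1 = -c + 1 := by omega
    rw [h7]
  rw [hqf]
  have hdd : (v - v⁻¹) ^ ((2 - c) - 2 : ℤ)
      = (v - v⁻¹) ^ ((-c).toNat : ℕ) := by
    rw [show ((2 - c) - 2 : ℤ) = (((-c).toNat : ℕ) : ℤ) by omega, zpow_natCast]
  rw [hdd]
  have hT : (1 - (2 - c)) * ((2 - c) - 2 + 2 * c) / 2
      = ((((-c).toNat : ℕ) : ℤ) * ((((-c).toNat : ℕ) : ℤ) + 1)) / 2 := by
    have h8 : (1 - (2 - c)) * ((2 - c) - 2 + 2 * c)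
        = ((((-c).toNat : ℕ) : ℤ) * ((((-c).toNat : ℕ) : ℤ) + 1)) := by
      rw [hn]; ring
    rw [h8]
  rw [hT]
  have hsign : (-1 : RatFunc K) ^ (1 - c) = -(-1 : RatFunc K) ^ ((-c).toNat : ℕ) := by
    rw [show (1 - c : ℤ) = (((-c).toNat : ℕ) : ℤ) + 1 by omega,
      zpow_add_one₀ (by norm_num : (-1 : RatFunc K) ≠ 0), zpow_natCast]
    ring
  rw [hsign]
  have hq2 : qint v (2 - c) = (v ^ (2 - c) - v ^ (-(2 - c))) * (v - v⁻¹)⁻¹ := by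
    rw [qint, div_eq_mul_inv]
  have hvv : v ^ (2 - c) * v ^ (-(2 - c)) = 1 := by
    rw [← zpow_add₀ hv0]; simp
  set ν := (-1 : RatFunc K) ^ ((-c).toNat : ℕ) * qfact v ((-c).toNat) * qint v (-c + 1) *
      v ^ (((((-c).toNat : ℕ) : ℤ) * ((((-c).toNat : ℕ) : ℤ) + 1)) / 2) *
      (v - v⁻¹) ^ ((-c).toNat : ℕ) with hν
  linear_combination (v ^ (2 - c) * ν) * hq2 - (ν * (v - v⁻¹)⁻¹) * hvv
end Aux
end Chunk7
section Chunk8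

namespace Aux
variable {K : Type*} [Field K] (v : RatFunc K)

lemma base_A {A : Type*} [Ring A] [Algebra (RatFunc K) A]
    (hv0 : v ≠ 0) (hvg : ∀ z : ℤ, z ≠ 0 → v ^ z ≠ 1) (Bi Bt ki kt : A) (c : ℤ) (hc : c ≤ 0)
    (hki : ki * Bi = v ^ (c - 2) • (Bi * ki))
    (hkt : kt * Bi = v ^ (2 - c) • (Bi * kt))
    (hbkl : BKL v Bi Bt ki kt c) :
    ysum v Bi Bt c ((1 - c).toNat + 1)
      = lam v c ((1 - c).toNat + 1) •
          (dp v Bi ((((1 - c).toNat + 1 : ℕ) : ℤ) - 1) * kt) := by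
  have hd := sub_inv_ne_zero v hv0 hvg
  have hm0 : (((1 - c).toNat : ℕ) : ℤ) = 1 - c := Int.toNat_of_nonneg (by omega)
  have hY : ysum v Bi Bt c ((1 - c).toNat)
      = (v - v⁻¹)⁻¹ •
        ((v ^ c * qpoch (v ^ (-2 : ℤ)) (v ^ (-2 : ℤ)) (-c).toNat) • (dp v Bi (-c) * ki)
          - qpoch (v ^ (2 : ℤ)) (v ^ (2 : ℤ)) (-c).toNat • (dp v Bi (-c) * kt)) := by
    rw [← hbkl, ysum]
    apply Finset.sum_congr rfl
    intro r _
    rw [hm0, show (1 : ℤ) - c - (1 - c) = 0 by ring, mul_zero, zpow_zero, mul_one]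
  have hrec := key_rec v hv0 hvg Bi Bt c ((1 - c).toNat)
  rw [hY, show c + 2 * (((1 - c).toNat : ℕ) : ℤ) = 2 - c by omega,
    show (((1 - c).toNat : ℕ) : ℤ) + 1 = 2 - c by omega] at hrec
  have eki1 : (dp v Bi (-c) * ki) * Bi
      = (v ^ (c - 2) * qint v (-c + 1)) • (dp v Bi (-c + 1) * ki) := by
    rw [mul_assoc, hki, mul_smul_comm, ← mul_assoc, dp_mul v hv0 hvg, smul_mul_assoc, smul_smul]
  have ekt1 : (dp v Bi (-c) * kt) * Bi
      = (v ^ (2 - c) * qint v (-c + 1)) • (dp v Bi (-c + 1) * kt) := by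
    rw [mul_assoc, hkt, mul_smul_comm, ← mul_assoc, dp_mul v hv0 hvg, smul_mul_assoc, smul_smul]
  have eki2 : Bi * (dp v Bi (-c) * ki) = qint v (-c + 1) • (dp v Bi (-c + 1) * ki) := by
    rw [← mul_assoc, mul_dp v hv0 hvg, smul_mul_assoc]
  have ekt2 : Bi * (dp v Bi (-c) * kt) = qint v (-c + 1) • (dp v Bi (-c + 1) * kt) := by
    rw [← mul_assoc, mul_dp v hv0 hvg, smul_mul_assoc]
  rw [smul_mul_assoc, sub_mul, smul_mul_assoc, smul_mul_assoc, eki1, ekt1,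
    mul_smul_comm, mul_sub, mul_smul_comm, mul_smul_comm, eki2, ekt2] at hrec
  have hvv2 : v ^ (2 - c) * v ^ (c - 2) = 1 := by
    rw [← zpow_add₀ hv0]; norm_num
  have h9 : (v ^ (2 - c) * qint v (2 - c)) • ysum v Bi Bt c ((1 - c).toNat + 1)
      = ((v - v⁻¹)⁻¹ * qpoch (v ^ (2 : ℤ)) (v ^ (2 : ℤ)) (-c).toNat * qint v (-c + 1) *
          (1 - v ^ (2 - c) * v ^ (2 - c))) • (dp v Bi (-c + 1) * kt) := by
    rw [hrec]
    simp only [smul_sub, smul_smul]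
    rw [sub_sub_sub_comm, ← sub_smul, ← sub_smul]
    have hz : v ^ (2 - c) * ((v - v⁻¹)⁻¹ * (v ^ c * qpoch (v ^ (-2 : ℤ)) (v ^ (-2 : ℤ)) (-c).toNat *
          (v ^ (c - 2) * qint v (-c + 1))))
        - (v - v⁻¹)⁻¹ * (v ^ c * qpoch (v ^ (-2 : ℤ)) (v ^ (-2 : ℤ)) (-c).toNat * qint v (-c + 1))
        = 0 := by
      linear_combination ((v - v⁻¹)⁻¹ * (v ^ c * qpoch (v ^ (-2 : ℤ)) (v ^ (-2 : ℤ)) (-c).toNat) *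
        qint v (-c + 1)) * hvv2
    rw [hz, zero_smul, zero_sub, ← neg_smul]
    congr 1
    ring
  have ha : v ^ (2 - c) * qint v (2 - c) ≠ 0 :=
    mul_ne_zero (zpow_ne_zero _ hv0) (qint_ne_zero v hv0 hvg _ (by omega))
  have h5 := congrArg (fun z => (v ^ (2 - c) * qint v (2 - c))⁻¹ • z) h9
  simp only [smul_smul, inv_mul_cancel₀ ha, one_smul] at h5
  rw [h5, show (((1 - c).toNat + 1 : ℕ) : ℤ) - 1 = -c + 1 by omega]
  congr 1
  apply mul_left_cancel₀ ha
  rw [← mul_assoc, mul_inv_cancel₀ ha, one_mul]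
  exact (base_scalar v hv0 hvg c hc).trans (by ring)

end Aux
end Chunk8

/-- (Theorem 3.2, explicit form for e = 1.) Assuming the BKL relation, for m > 1−c:
∑_{r+s=m} (−1)^{r+c} q_i^{r(1−c−m)} B_i^{(r)} B_{τi} B_i^{(s)}
= (−1)^{1−c} [m−1]! (q_i−q_i^{-1})^{m−2} q_i^{(1−m)(m−2+2c)/2} B_i^{(m−1)} k̃_{τi}. -/
theorem stmt6 {K : Type*} [Field K] [CharZero K]
    {A : Type*} [Ring A] [Algebra (RatFunc K) A]
    (ε : ℕ) (hε : 0 < ε) (v : RatFunc K) (hv : v = RatFunc.X ^ ε)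
    (Bi Bt ki kt : A) (c : ℤ) (hc : c ≤ 0)
    (hki : ki * Bi = v ^ (c - 2) • (Bi * ki))
    (hkt : kt * Bi = v ^ (2 - c) • (Bi * kt))
    (hbkl : BKL v Bi Bt ki kt c)
    (m : ℕ) (hm : 1 - c < (m : ℤ)) :
    ∑ r ∈ Finset.range (m + 1),
        ((-1 : RatFunc K) ^ ((r : ℤ) + c) * v ^ ((r : ℤ) * (1 - c - (m : ℤ)))) •
          (dp v Bi (r : ℤ) * Bt * dp v Bi ((m : ℤ) - (r : ℤ)))
      = ((-1 : RatFunc K) ^ (1 - c) * qfact v (m - 1) * (v - v⁻¹) ^ ((m : ℤ) - 2) *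
          v ^ ((1 - (m : ℤ)) * ((m : ℤ) - 2 + 2 * c) / 2)) •
            (dp v Bi ((m : ℤ) - 1) * kt) := by

  obtain ⟨hv0, hvg⟩ := Aux.generic ε hε v hv
  have main : ∀ k : ℕ, ysum v Bi Bt c ((1 - c).toNat + 1 + k)
      = lam v c ((1 - c).toNat + 1 + k) •
          (dp v Bi ((((1 - c).toNat + 1 + k : ℕ) : ℤ) - 1) * kt) := by
    intro k
    induction k with
    | zero => exact Aux.base_A v hv0 hvg Bi Bt ki kt c hc hki hkt hbkl
    | succ k ih =>
      exact Aux.step_A v hv0 hvg Bi Bt kt c hkt ((1 - c).toNat + 1 + k) (by omega) ih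
  obtain ⟨k, hk⟩ : ∃ k : ℕ, m = (1 - c).toNat + 1 + k := ⟨m - ((1 - c).toNat + 1), by omega⟩
  subst hk
  exact main k
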